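/- arXiv:2205.05905 — 6 statements merged into one kernel-verified Lean document; each statement's English description precedes it below -/
import Mathlib

section
/- Let n be a natural number and let ℓ be any complex number. Then ∑_{k=0}^{n} (-1/2)^k · C(n+ℓ, n-k) · C(2k+2ℓ, k) equals 2^{-n} · C(n+ℓ, n/2) if n is even, and equals 0 if n is odd. (Here binom(n+ℓ, k+ℓ) is interpreted via its codegree as C(n+ℓ, n-k).) -/
/-- Generalized binomial coefficient `C(z, m) = (∏_{j=0}^{m-1} (z - j)) / m!` for complex `z`. -/
noncomputable def cbinom (z : ℂ) (m : ℕ) : ℂ :=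
  (∏ j ∈ Finset.range m, (z - j)) / (Nat.factorial m)

open Finset

private lemma RD.L1 (z : ℂ) (m : ℕ) : cbinom z (m+1) * ((m:ℂ)+1) = cbinom z m * (z - m) := by
  have hm : ((Nat.factorial m : ℕ) : ℂ) ≠ 0 := Nat.cast_ne_zero.2 (Nat.factorial_ne_zero m)
  have hm1 : ((m:ℂ)+1) ≠ 0 := Nat.cast_add_one_ne_zero m
  unfold cbinom
  rw [prod_range_succ, Nat.factorial_succ]
  push_cast
  field_simp

private lemma RD.L3 (z : ℂ) (m : ℕ) :
    cbinom (z+2) m * ((z + 2 - m) * (z + 1 - m)) = (z+2) * (z+1) * cbinom z m := by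
  have hm : ((Nat.factorial m : ℕ) : ℂ) ≠ 0 := Nat.cast_ne_zero.2 (Nat.factorial_ne_zero m)
  have e1 : ∏ j ∈ range (m+2), (z + 2 - (j:ℂ)) =
      (∏ j ∈ range m, (z + 2 - (j:ℂ))) * ((z + 2 - m) * (z + 1 - m)) := by
    rw [prod_range_succ, prod_range_succ]
    push_cast
    ring
  have e2 : ∏ j ∈ range (m+2), (z + 2 - (j:ℂ)) =
      (z+2) * (z+1) * ∏ j ∈ range m, (z - (j:ℂ)) := by
    rw [prod_range_succ', prod_range_succ']
    rw [Finset.prod_congr rfl (fun (j : ℕ) (_ : j ∈ range m) => by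
      push_cast
      ring_nf : ∀ j ∈ range m, (z + 2 - ((j + 1 + 1 : ℕ) : ℂ)) = z - (j:ℂ))]
    push_cast
    ring
  have key := e1.symm.trans e2
  unfold cbinom
  field_simp
  linear_combination key

/-- The summand. -/
private noncomputable def RD.H (n k : ℕ) (ℓ : ℂ) : ℂ :=
  (-(1/2) : ℂ) ^ k * cbinom ((n : ℂ) + ℓ) (n - k) * cbinom (2 * (k : ℂ) + 2 * ℓ) k

/-- The sum. -/
private noncomputable def RD.S (n : ℕ) (ℓ : ℂ) : ℂ := ∑ k ∈ Finset.range (n+1), RD.H n k ℓ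

/-- The right-hand side. -/
private noncomputable def RD.R (n : ℕ) (ℓ : ℂ) : ℂ :=
  if Even n then (2 : ℂ)⁻¹ ^ n * cbinom ((n : ℂ) + ℓ) (n / 2) else 0

namespace RD

private lemma lemA (n k : ℕ) (hk : k ≤ n) (ℓ : ℂ) :
    ((n:ℂ)+2-k) * ((n:ℂ)+1-k) * H (n+2) k ℓ = ((n:ℂ)+2+ℓ) * ((n:ℂ)+1+ℓ) * H n k ℓ := by
  unfold H
  have hs1 : n + 2 - k = (n - k) + 1 + 1 := by omega
  have hc : ((n - k : ℕ) : ℂ) = (n:ℂ) - k := by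
    push_cast [Nat.cast_sub hk]; ring
  rw [hs1]
  push_cast
  rw [show ((n:ℂ) + 2 + ℓ) = ((n:ℂ) + ℓ) + 2 by ring]
  have h1 := RD.L1 (((n:ℂ) + ℓ) + 2) (n - k + 1)
  have h2 := RD.L1 (((n:ℂ) + ℓ) + 2) (n - k)
  have h3 := RD.L3 ((n:ℂ) + ℓ) (n - k)
  push_cast [hc] at h1 h2 h3
  linear_combination ((-(1/2) : ℂ))^k * cbinom (2 * (k:ℂ) + 2 * ℓ) k *
    ((((n:ℂ)-k)+1) * h1 + (((n:ℂ)+ℓ+2) - ((n:ℂ)-k) - 1) * h2 + h3)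

private lemma lemB (m k : ℕ) (hk : k < m) (ℓ : ℂ) :
    ((k:ℂ)+1) * ((k:ℂ)+1+2*ℓ) * H m (k+1) ℓ
      = -(((m:ℂ)-k) * (2*(k:ℂ)+2*ℓ+1)) * H m k ℓ := by
  unfold H
  have hs1 : m - k = (m - (k+1)) + 1 := by omega
  have hc : ((m - (k+1) : ℕ) : ℂ) = (m:ℂ) - k - 1 := by
    push_cast [Nat.cast_sub (by omega : k + 1 ≤ m)]; ring
  rw [hs1, pow_succ]
  push_cast
  rw [show (2 * ((k:ℂ)+1) + 2*ℓ) = (2*(k:ℂ) + 2*ℓ) + 2 by ring]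
  have h1 := RD.L1 ((m:ℂ) + ℓ) (m - (k+1))
  have h2 := RD.L1 ((2*(k:ℂ) + 2*ℓ) + 2) k
  have h3 := RD.L3 (2*(k:ℂ) + 2*ℓ) k
  push_cast [hc] at h1 h2 h3
  linear_combination
    (((k:ℂ)+1+2*ℓ) * (-(1/2)) * ((-(1/2):ℂ))^k * cbinom ((m:ℂ)+ℓ) (m-(k+1))) * h2
    + ((-(1/2)) * ((-(1/2):ℂ))^k * cbinom ((m:ℂ)+ℓ) (m-(k+1))) * h3
    + ((2*(k:ℂ)+2*ℓ+1) * ((-(1/2):ℂ))^k * cbinom (2*(k:ℂ)+2*ℓ) k) * h1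

private lemma Srec (n : ℕ) (ℓ : ℂ) :
    ((n:ℂ)+2) * ((n:ℂ)+2+2*ℓ) * S (n+2) ℓ = ((n:ℂ)+2+ℓ) * ((n:ℂ)+1+ℓ) * S n ℓ := by
  set G : ℕ → ℂ := fun k => -((k:ℂ) * ((k:ℂ)+2*ℓ)) * H (n+2) k ℓ with hG
  have h1 : ((n:ℂ)+2+ℓ) * ((n:ℂ)+1+ℓ) * S n ℓ
      = ∑ k ∈ range (n+1), ((n:ℂ)+2-k) * ((n:ℂ)+1-k) * H (n+2) k ℓ := by
    rw [S, mul_sum]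
    exact Finset.sum_congr rfl fun k hk => (lemA n k (Nat.lt_succ_iff.mp (mem_range.mp hk)) ℓ).symm
  have h2 : ∑ k ∈ range (n+3), ((n:ℂ)+2-k) * ((n:ℂ)+1-k) * H (n+2) k ℓ
      = ∑ k ∈ range (n+1), ((n:ℂ)+2-k) * ((n:ℂ)+1-k) * H (n+2) k ℓ := by
    rw [show n+3 = (n+1)+1+1 by ring, sum_range_succ, sum_range_succ]
    push_cast
    ring_nf
  have key : ∀ k ∈ range (n+2),
      (((n:ℂ)+2) * ((n:ℂ)+2+2*ℓ) - ((n:ℂ)+2-k) * ((n:ℂ)+1-k)) * H (n+2) k ℓ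
        = G (k+1) - G k := by
    intro k hk
    have hb := lemB (n+2) k (by simpa using hk) ℓ
    simp only [hG]
    push_cast at hb ⊢
    linear_combination hb
  have tele : ∑ k ∈ range (n+2), (G (k+1) - G k) = G (n+2) - G 0 :=
    Finset.sum_range_sub G (n+2)
  have hsplit : ∑ k ∈ range (n+3),
      (((n:ℂ)+2) * ((n:ℂ)+2+2*ℓ) - ((n:ℂ)+2-k) * ((n:ℂ)+1-k)) * H (n+2) k ℓ
      = ∑ k ∈ range (n+2), (G (k+1) - G k)
        + (((n:ℂ)+2) * ((n:ℂ)+2+2*ℓ) - ((n:ℂ)+2-(n+2:ℕ)) * ((n:ℂ)+1-(n+2:ℕ))) * H (n+2) (n+2) ℓ := by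
    rw [sum_range_succ]
    congr 1
    exact Finset.sum_congr rfl key
  have hS2 : S (n+2) ℓ = ∑ k ∈ range (n+3), H (n+2) k ℓ := rfl
  have expand : ((n:ℂ)+2) * ((n:ℂ)+2+2*ℓ) * S (n+2) ℓ
      - ∑ k ∈ range (n+3), ((n:ℂ)+2-k) * ((n:ℂ)+1-k) * H (n+2) k ℓ
      = ∑ k ∈ range (n+3),
        (((n:ℂ)+2) * ((n:ℂ)+2+2*ℓ) - ((n:ℂ)+2-k) * ((n:ℂ)+1-k)) * H (n+2) k ℓ := by
    rw [hS2, mul_sum, ← Finset.sum_sub_distrib]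
    exact Finset.sum_congr rfl fun k _ => by ring
  have hGval : G (n+2) = -(((n:ℂ)+2) * ((n:ℂ)+2+2*ℓ)) * H (n+2) (n+2) ℓ := by
    simp only [hG]; push_cast; ring
  have hG0 : G 0 = 0 := by simp [hG]
  have final := expand
  rw [hsplit, tele, hGval, hG0, h2, ← h1] at final
  push_cast at final ⊢
  linear_combination final

private lemma Rrec (n : ℕ) (ℓ : ℂ) :
    ((n:ℂ)+2) * ((n:ℂ)+2+2*ℓ) * R (n+2) ℓ = ((n:ℂ)+2+ℓ) * ((n:ℂ)+1+ℓ) * R n ℓ := by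
  by_cases h : Even n
  · obtain ⟨m, rfl⟩ := h
    have he1 : Even (m + m) := ⟨m, rfl⟩
    have he2 : Even (m + m + 2) := ⟨m+1, by ring⟩
    rw [R, R, if_pos he1, if_pos he2]
    rw [show (m+m+2)/2 = m+1 by omega, show (m+m)/2 = m by omega]
    have hpow : (2:ℂ)⁻¹ ^ (m+m+2) = (2:ℂ)⁻¹ ^ (m+m) * (2⁻¹ * 2⁻¹) := by
      rw [pow_add]; ring
    push_cast
    rw [show ((m:ℂ) + m + 2 + ℓ) = ((m:ℂ) + m + ℓ) + 2 by ring]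
    have h1 := RD.L1 (((m:ℂ) + m + ℓ) + 2) m
    have h3 := RD.L3 ((m:ℂ) + m + ℓ) m
    rw [hpow]
    linear_combination ((2:ℂ)⁻¹^(m+m) * (((m:ℂ)+m+ℓ)+1-(m:ℂ))) * h1
      + ((2:ℂ)⁻¹^(m+m)) * h3
  · have h2 : ¬ Even (n+2) := by
      simpa [Nat.even_add] using h
    rw [R, R, if_neg h, if_neg h2]
    ring

private lemma base0 (ℓ : ℂ) : S 0 ℓ = R 0 ℓ := by
  simp [S, H, R, cbinom]

private lemma base1 (ℓ : ℂ) : S 1 ℓ = R 1 ℓ := by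
  simp [S, H, R, cbinom, Finset.sum_range_succ]
  ring

private lemma contS (n : ℕ) : Continuous fun ℓ => S n ℓ := by
  unfold S
  apply continuous_finset_sum
  intro k _
  unfold H cbinom
  apply Continuous.mul
  · apply Continuous.mul continuous_const
    apply Continuous.div_const
    apply continuous_finset_prod
    intro j _
    fun_prop
  · apply Continuous.div_const
    apply continuous_finset_prod
    intro j _
    fun_prop

private lemma contR (n : ℕ) : Continuous fun ℓ => R n ℓ := by
  unfold R
  by_cases h : Even n <;> simp [h]
  · apply Continuous.mul continuous_const
    unfold cbinom
    apply Continuous.div_const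
    apply continuous_finset_prod
    intro j _
    fun_prop
  · exact continuous_const

private lemma main : ∀ n : ℕ, ∀ ℓ : ℂ, S n ℓ = R n ℓ := by
  intro n
  induction n using Nat.twoStepInduction with
  | zero => exact base0
  | one => exact base1
  | more n ih1 _ =>
    have heq : ∀ ℓ : ℂ, ((n:ℂ)+2+2*ℓ) ≠ 0 → S (n+2) ℓ = R (n+2) ℓ := by
      intro ℓ hℓ
      have h := Srec n ℓ
      rw [ih1 ℓ, ← Rrec n ℓ] at h
      have hn2 : ((n:ℂ)+2) ≠ 0 := by
        intro hc
        apply Nat.cast_add_one_ne_zero (R := ℂ) (n+1)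
        push_cast
        linear_combination hc
      exact mul_left_cancel₀ (mul_ne_zero hn2 hℓ) h
    have hfun : (fun ℓ => S (n+2) ℓ) = fun ℓ => R (n+2) ℓ := by
      apply Continuous.ext_on (dense_compl_singleton (-((n:ℂ)+2)/2)) (contS (n+2)) (contR (n+2))
      intro ℓ hℓ
      apply heq
      intro hc
      apply hℓ
      show ℓ ∈ ({-((n:ℂ)+2)/2} : Set ℂ)
      simp only [Set.mem_singleton_iff]
      linear_combination hc / 2
    intro ℓ
    exact congrFun hfun ℓ

end RD

/-- Proposition 1: a complex-parameter generalization of the Reed Dawson identity. -/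
theorem stmt_0 (n : ℕ) (ℓ : ℂ) :
    ∑ k ∈ Finset.range (n + 1),
      (-(1/2) : ℂ) ^ k * cbinom ((n : ℂ) + ℓ) (n - k) * cbinom (2 * (k : ℂ) + 2 * ℓ) k
    = if Even n then (2 : ℂ)⁻¹ ^ n * cbinom ((n : ℂ) + ℓ) (n / 2) else 0 := by
  have h := RD.main n ℓ
  simp only [RD.S, RD.H, RD.R] at h
  exact h
end

section
/- Let n be a natural number and let ℓ be a complex number such that ℓ + j ≠ 0 for every integer j with 1 ≤ j ≤ n. Then ∑_{k=0}^{n} (-1/2)^k · binom(n,k) · C(2k+2ℓ, k) / C(k+ℓ, k) equals 2^{-n} · binom(n, n/2) / C(n/2+ℓ, n/2) if n is even, and equals 0 if n is odd. -/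
open Finset Filter

noncomputable def Aa (ℓ : ℂ) (k : ℕ) : ℂ := ∏ j ∈ Finset.range k, (2*(k:ℂ) + 2*ℓ - j)
noncomputable def Bb (ℓ : ℂ) (k : ℕ) : ℂ := ∏ j ∈ Finset.range k, ((k:ℂ) + ℓ - j)

lemma Bb_succ (ℓ : ℂ) (k : ℕ) : Bb ℓ (k+1) = (ℓ + (k+1)) * Bb ℓ k := by
  rw [Bb, Finset.prod_range_succ']
  rw [show (∏ j ∈ Finset.range k, ((((k:ℕ)+1 : ℕ):ℂ) + ℓ - ((j+1 : ℕ):ℂ)))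
      = Bb ℓ k from Finset.prod_congr rfl (by intro j hj; push_cast; ring)]
  push_cast; ring

lemma Bb_ne (ℓ : ℂ) (k : ℕ) (h : ∀ j : ℕ, 1 ≤ j → j ≤ k → ℓ + (j:ℂ) ≠ 0) :
    Bb ℓ k ≠ 0 := by
  induction k with
  | zero => simp [Bb]
  | succ m ih =>
      rw [Bb_succ]
      exact mul_ne_zero (by simpa using h (m+1) (by omega) le_rfl)
        (ih fun j h1 h2 => h j h1 (by omega))

lemma Aa_succ (ℓ : ℂ) (k : ℕ) :
    (2*ℓ + (k+1)) * Aa ℓ (k+1) = (2*ℓ+2*k+1) * (2*ℓ+2*k+2) * Aa ℓ k := by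
  have h1 : Aa ℓ (k+1) = (2*ℓ+2*(k:ℂ)+2) * ∏ j ∈ Finset.range k, (2*(k:ℂ)+1 + 2*ℓ - j) := by
    rw [Aa, Finset.prod_range_succ']
    rw [show (∏ j ∈ Finset.range k, (2*(((k:ℕ)+1 : ℕ):ℂ) + 2*ℓ - ((j+1 : ℕ):ℂ)))
        = ∏ j ∈ Finset.range k, (2*(k:ℂ)+1 + 2*ℓ - j) from
      Finset.prod_congr rfl (by intro j hj; push_cast; ring)]
    push_cast; ring
  have h2 : (∏ j ∈ Finset.range k, (2*(k:ℂ)+1 + 2*ℓ - j)) * (2*ℓ + (k:ℂ)+1)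
      = (2*ℓ+2*k+1) * Aa ℓ k := by
    have e1 := Finset.prod_range_succ (fun j : ℕ => (2*(k:ℂ)+1 + 2*ℓ - j)) k
    have e2 := Finset.prod_range_succ' (fun j : ℕ => (2*(k:ℂ)+1 + 2*ℓ - j)) k
    rw [e1] at e2
    rw [show (∏ j ∈ Finset.range k, (2*(k:ℂ)+1 + 2*ℓ - (((j+1:ℕ)):ℂ)))
        = Aa ℓ k from Finset.prod_congr rfl (by intro j hj; push_cast; ring)] at e2
    rw [show (2*(k:ℂ)+1+2*ℓ - (k:ℂ)) = (k:ℂ)+1+2*ℓ from by ring] at e2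
    rw [show (2*(k:ℂ)+1+2*ℓ - ((0:ℕ):ℂ)) = 2*(k:ℂ)+1+2*ℓ from by push_cast; ring] at e2
    rw [show (2*ℓ + (k:ℂ)+1) = (k:ℂ)+1+2*ℓ from by ring, e2]
    ring
  calc (2*ℓ + ((k:ℂ)+1)) * Aa ℓ (k+1)
      = ((∏ j ∈ Finset.range k, (2*(k:ℂ)+1 + 2*ℓ - j)) * (2*ℓ + (k:ℂ)+1)) * (2*ℓ+2*(k:ℂ)+2) := by
        rw [h1]; ring
    _ = (2*ℓ+2*k+1) * (2*ℓ+2*k+2) * Aa ℓ k := by rw [h2]; ring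

lemma cbinom_div (ℓ : ℂ) (k : ℕ) :
    cbinom (2*(k:ℂ) + 2*ℓ) k / cbinom ((k:ℂ) + ℓ) k = Aa ℓ k / Bb ℓ k := by
  rw [cbinom, cbinom, div_div_div_comm, div_self (by exact_mod_cast Nat.factorial_ne_zero k),
    div_one]
  rfl

lemma chooseC (m k : ℕ) (hk : k ≤ m + 2) :
    (((m+2).choose k : ℂ)) * ((m:ℂ)+2-k) * ((m:ℂ)+1-k)
      = (m.choose k : ℂ) * ((m:ℂ)+2) * ((m:ℂ)+1) := by
  by_cases h : k ≤ m + 1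
  · have c1 := Nat.choose_mul_succ_eq (m+1) k
    have c2 := Nat.choose_mul_succ_eq m k
    have c1' : ((m+1).choose k : ℂ) * ((m:ℂ)+2) = ((m+2).choose k : ℂ) * ((m:ℂ)+2-k) := by
      have := congrArg (Nat.cast : ℕ → ℂ) c1
      push_cast [Nat.cast_sub (show k ≤ m+2 by omega)] at this
      convert this using 2 <;> push_cast <;> ring
    have c2' : ((m).choose k : ℂ) * ((m:ℂ)+1) = ((m+1).choose k : ℂ) * ((m:ℂ)+1-k) := by
      have := congrArg (Nat.cast : ℕ → ℂ) c2
      push_cast [Nat.cast_sub (show k ≤ m+1 by omega)] at this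
      convert this using 2 <;> push_cast <;> ring
    linear_combination -c2' * ((m:ℂ)+2) - c1' * ((m:ℂ)+1-(k:ℂ))
  · have hk2 : k = m + 2 := by omega
    subst hk2
    rw [Nat.choose_self, Nat.choose_eq_zero_of_lt (show m < m + 2 by omega)]
    push_cast
    ring
lemma choose_succ_C (n k : ℕ) (hk : k ≤ n) :
    ((n.choose (k+1) : ℂ)) * ((k:ℂ)+1) = (n.choose k : ℂ) * ((n:ℂ)-k) := by
  have := congrArg (Nat.cast : ℕ → ℂ) (Nat.choose_succ_right_eq n k)
  push_cast [Nat.cast_sub hk] at this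
  convert this using 2 <;> push_cast <;> ring

noncomputable def tt (ℓ : ℂ) (n k : ℕ) : ℂ :=
  (-(1/2) : ℂ)^k * (n.choose k : ℂ) * Aa ℓ k / Bb ℓ k

noncomputable def Fs (ℓ : ℂ) (n : ℕ) : ℂ := ∑ k ∈ Finset.range (n+1), tt ℓ n k

lemma tt_succ (ℓ : ℂ) (n k : ℕ) (hk : k + 1 ≤ n)
    (hB : Bb ℓ k ≠ 0) (hl : ℓ + ((k:ℂ)+1) ≠ 0) :
    ((k:ℂ)+1) * (2*ℓ+(k:ℂ)+1) * tt ℓ n (k+1)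
      = -(((n:ℂ)-k) * (2*ℓ+2*k+1)) * tt ℓ n k := by
  have hC := choose_succ_C n k (by omega)
  have hA := Aa_succ ℓ k
  calc ((k:ℂ)+1) * (2*ℓ+(k:ℂ)+1) * tt ℓ n (k+1)
      = ((n.choose (k+1) : ℂ) * ((k:ℂ)+1)) * (-(1/2):ℂ)^(k+1)
          * ((2*ℓ + ((k:ℂ)+1)) * Aa ℓ (k+1)) / ((ℓ + ((k:ℂ)+1)) * Bb ℓ k) := by
        rw [tt, Bb_succ]; push_cast; ring
    _ = ((n.choose k : ℂ) * ((n:ℂ)-k)) * (-(1/2):ℂ)^(k+1)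
          * ((2*ℓ+2*(k:ℂ)+1) * (2*ℓ+2*(k:ℂ)+2) * Aa ℓ k) / ((ℓ + ((k:ℂ)+1)) * Bb ℓ k) := by
        rw [hC, hA]
    _ = -(((n:ℂ)-k) * (2*ℓ+2*k+1)) * tt ℓ n k := by
        rw [tt, ← mul_div_assoc, div_eq_div_iff (mul_ne_zero hl hB) hB]
        ring

lemma tt_zero (ℓ : ℂ) (n k : ℕ) (h : n < k) : tt ℓ n k = 0 := by
  rw [tt, Nat.choose_eq_zero_of_lt h]; simp

lemma Fs_rec (ℓ : ℂ) (m : ℕ) (hℓ : ∀ j : ℕ, 1 ≤ j → j ≤ m + 2 → ℓ + (j:ℂ) ≠ 0) :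
    ((m:ℂ)+2+2*ℓ) * Fs ℓ (m+2) = ((m:ℂ)+1) * Fs ℓ m := by
  have key : ∀ k ∈ Finset.range (m+3),
      ((m:ℂ)+2)*((m:ℂ)+2+2*ℓ) * tt ℓ (m+2) k - ((m:ℂ)+2)*((m:ℂ)+1) * tt ℓ m k
        = (fun k : ℕ => (k:ℂ)*((k:ℂ)+2*ℓ) * tt ℓ (m+2) k) k
          - (fun k : ℕ => (k:ℂ)*((k:ℂ)+2*ℓ) * tt ℓ (m+2) k) (k+1) := by
    intro k hk
    simp only []
    rcases lt_or_ge k (m+2) with hkN | hkN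
    · have hB : Bb ℓ k ≠ 0 := Bb_ne ℓ k (fun j h1 h2 => hℓ j h1 (by omega))
      have hl : ℓ + ((k:ℂ)+1) ≠ 0 := by
        have := hℓ (k+1) (by omega) (by omega); push_cast at this; exact this
      have e1 := tt_succ ℓ (m+2) k (by omega) hB hl
      have e2 : ((m:ℂ)+2)*((m:ℂ)+1) * tt ℓ m k
          = ((m:ℂ)+2-k)*((m:ℂ)+1-k) * tt ℓ (m+2) k := by
        have hc := chooseC m k (by omega)
        rw [tt, tt, ← mul_div_assoc, ← mul_div_assoc, div_eq_div_iff hB hB]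
        linear_combination (-(-(1/2):ℂ)^k * Aa ℓ k * Bb ℓ k) * hc
      rw [e2]
      push_cast at e1 ⊢
      linear_combination e1
    · have hk' : k = m + 2 := by simp at hk; omega
      subst hk'
      rw [tt_zero ℓ (m+2) (m+2+1) (by omega), tt_zero ℓ m (m+2) (by omega)]
      push_cast
      ring
  have tele := Finset.sum_congr rfl key
  rw [Finset.sum_range_sub' (fun k : ℕ => (k:ℂ)*((k:ℂ)+2*ℓ) * tt ℓ (m+2) k) (m+3)] at tele
  rw [tt_zero ℓ (m+2) (m+3) (by omega)] at tele
  simp only [Nat.cast_zero, zero_mul, mul_zero, sub_zero, zero_add] at tele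
  have hs2 : ∑ k ∈ Finset.range (m+3), tt ℓ m k = Fs ℓ m := by
    rw [show m+3 = (m+1)+1+1 from rfl, Finset.sum_range_succ, Finset.sum_range_succ,
      tt_zero ℓ m (m+1) (by omega), tt_zero ℓ m (m+1+1) (by omega), Fs]
    ring
  rw [Finset.sum_sub_distrib, ← Finset.mul_sum, ← Finset.mul_sum, hs2] at tele
  have hFs : ∑ k ∈ Finset.range (m+3), tt ℓ (m+2) k = Fs ℓ (m+2) := rfl
  rw [hFs] at tele
  have hNne : ((m:ℂ)+2) ≠ 0 := by
    have : ((m+2 : ℕ) : ℂ) ≠ 0 := Nat.cast_ne_zero.mpr (by omega)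
    push_cast at this; exact this
  have h2 : ((m:ℂ)+2)*(((m:ℂ)+2+2*ℓ) * Fs ℓ (m+2)) = ((m:ℂ)+2)*(((m:ℂ)+1) * Fs ℓ m) := by
    linear_combination tele
  exact mul_left_cancel₀ hNne h2

noncomputable def Rs (ℓ : ℂ) (n : ℕ) : ℂ :=
  if Even n then (2:ℂ)⁻¹ ^ n * (n.choose (n / 2) : ℂ) / cbinom (((n / 2 : ℕ) : ℂ) + ℓ) (n / 2)
  else 0

lemma cbinom_B (ℓ : ℂ) (k : ℕ) : cbinom ((k:ℂ) + ℓ) k = Bb ℓ k / (Nat.factorial k : ℂ) := rfl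

lemma Fs_zero (ℓ : ℂ) : Fs ℓ 0 = 1 := by
  simp [Fs, tt, Aa, Bb]

lemma Fs_one (ℓ : ℂ) (hl : ℓ + 1 ≠ 0) : Fs ℓ 1 = 0 := by
  have hl' : (1:ℂ) + ℓ - 0 ≠ 0 := by
    intro h; exact hl (by linear_combination h)
  rw [Fs, Finset.sum_range_succ, Finset.sum_range_succ, Finset.sum_range_zero]
  simp only [tt, Aa, Bb, Finset.prod_range_succ, Finset.prod_range_zero]
  push_cast
  have h2 : (2:ℂ) + ℓ*2 ≠ 0 := by
    intro h; exact hl (by linear_combination h/2)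
  field_simp [hl']
  simp only [Nat.choose_zero_right, Nat.choose_self, Nat.cast_one]
  ring

lemma Rs_zero (ℓ : ℂ) : Rs ℓ 0 = 1 := by
  simp [Rs, cbinom]

lemma Rs_one (ℓ : ℂ) : Rs ℓ 1 = 0 := by
  simp [Rs]

lemma Rs_rec (ℓ : ℂ) (m : ℕ) (hℓ : ∀ j : ℕ, 1 ≤ j → j ≤ m + 2 → ℓ + (j:ℂ) ≠ 0) :
    ((m:ℂ)+2+2*ℓ) * Rs ℓ (m+2) = ((m:ℂ)+1) * Rs ℓ m := by
  by_cases he : Even m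
  · obtain ⟨M, hM⟩ := he
    subst hM
    have he2 : Even (M + M + 2) := ⟨M+1, by omega⟩
    have hd1 : (M + M + 2) / 2 = M + 1 := by omega
    have hd0 : (M + M) / 2 = M := by omega
    rw [Rs, Rs, if_pos he2, if_pos ⟨M, rfl⟩, hd1, hd0, cbinom_B, cbinom_B]
    have hBM : Bb ℓ M ≠ 0 := Bb_ne ℓ M (fun j h1 h2 => hℓ j h1 (by omega))
    have hlM : ℓ + ((M:ℂ)+1) ≠ 0 := by
      have := hℓ (M+1) (by omega) (by omega); push_cast at this; exact this
    have hBM1 : Bb ℓ (M+1) ≠ 0 := by rw [Bb_succ]; exact mul_ne_zero hlM hBM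
    have hcb : (((M+M+2).choose (M+1) : ℕ) : ℂ) * ((M:ℂ)+1)
        = 2 * (2*(M:ℂ)+1) * (((M+M).choose M : ℕ) : ℂ) := by
      have h1 : (M+M+2).choose (M+1) = Nat.centralBinom (M+1) := by
        rw [Nat.centralBinom]; congr 1; omega
      have h2 : (M+M).choose M = Nat.centralBinom M := by
        rw [Nat.centralBinom]; congr 1; omega
      have h3 := Nat.succ_mul_centralBinom_succ M
      rw [h1, h2]
      have := congrArg (Nat.cast : ℕ → ℂ) h3
      push_cast at this
      linear_combination this
    rw [div_div_eq_mul_div, div_div_eq_mul_div, ← mul_div_assoc, ← mul_div_assoc,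
      Bb_succ, div_eq_div_iff (mul_ne_zero hlM hBM) hBM]
    have hfac : ((Nat.factorial (M+1) : ℕ) : ℂ) = ((M:ℂ)+1) * (Nat.factorial M : ℂ) := by
      rw [Nat.factorial_succ]; push_cast; ring
    rw [hfac]
    push_cast
    linear_combination ((ℓ + (M:ℂ) + 1) * (2:ℂ)⁻¹^(M+M) * (Nat.factorial M : ℂ) * Bb ℓ M * (1/2)) * hcb
  · have ho2 : ¬ Even (m + 2) := by
      intro h; exact he (by rcases h with ⟨r, hr⟩; exact ⟨r-1, by omega⟩)
    rw [Rs, Rs, if_neg he, if_neg ho2]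
    ring

lemma good : ∀ n : ℕ, ∀ ℓ : ℂ, (∀ j : ℕ, 1 ≤ j → j ≤ n → ℓ + (j:ℂ) ≠ 0) →
    (∀ m : ℕ, 1 ≤ m → m ≤ n → m % 2 = n % 2 → 2*ℓ + (m:ℂ) ≠ 0) → Fs ℓ n = Rs ℓ n := by
  intro n
  induction n using Nat.strong_induction_on with
  | _ n ih =>
    match n with
    | 0 => intro ℓ _ _; rw [Fs_zero, Rs_zero]
    | 1 => intro ℓ hℓ _; rw [Fs_one ℓ (by simpa using hℓ 1 le_rfl le_rfl), Rs_one]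
    | (m+2) =>
      intro ℓ hℓ hodd
      have hIH : Fs ℓ m = Rs ℓ m :=
        ih m (by omega) ℓ (fun j h1 h2 => hℓ j h1 (by omega))
          (fun r h1 h2 h3 => hodd r h1 (by omega) (by omega))
      have h2 : ((m:ℂ)+2+2*ℓ) ≠ 0 := by
        have := hodd (m+2) (by omega) le_rfl rfl
        intro h; apply this; push_cast; linear_combination h
      have := Fs_rec ℓ m hℓ
      rw [hIH, ← Rs_rec ℓ m hℓ] at this
      exact mul_left_cancel₀ h2 this

lemma contAt_sum {ι : Type*} {s : Finset ι} {f : ι → ℂ → ℂ} {x : ℂ}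
    (h : ∀ i ∈ s, ContinuousAt (f i) x) :
    ContinuousAt (fun z => ∑ i ∈ s, f i z) x := by
  classical
  induction s using Finset.induction_on with
  | empty => simpa using continuousAt_const
  | insert a s hnotmem ih =>
    simp only [Finset.sum_insert hnotmem]
    exact (h a (Finset.mem_insert_self a s)).add
      (ih (fun i hi => h i (Finset.mem_insert_of_mem hi)))

lemma Fs_contAt (n : ℕ) (ℓ : ℂ) (hℓ : ∀ j : ℕ, 1 ≤ j → j ≤ n → ℓ + (j:ℂ) ≠ 0) :
    ContinuousAt (fun z => Fs z n) ℓ := by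
  apply contAt_sum
  intro k hk
  simp only [Finset.mem_range] at hk
  have hB : Bb ℓ k ≠ 0 := Bb_ne ℓ k (fun j h1 h2 => hℓ j h1 (by omega))
  apply ContinuousAt.div
  · apply ContinuousAt.mul
    · exact continuousAt_const
    · exact (continuous_finset_prod (Finset.range k)
        (fun j _ => by continuity)).continuousAt
  · exact (continuous_finset_prod (Finset.range k)
      (fun j _ => by continuity)).continuousAt
  · exact hB

/-- Proposition 2 of the paper. -/
theorem stmt_1 (n : ℕ) (ℓ : ℂ) (hℓ : ∀ j : ℕ, 1 ≤ j → j ≤ n → ℓ + (j : ℂ) ≠ 0) :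
    ∑ k ∈ Finset.range (n + 1),
      (-(1/2) : ℂ) ^ k * (n.choose k : ℂ) * cbinom (2 * (k : ℂ) + 2 * ℓ) k
        / cbinom ((k : ℂ) + ℓ) k
    = if Even n then
        (2 : ℂ)⁻¹ ^ n * (n.choose (n / 2) : ℂ) / cbinom (((n / 2 : ℕ) : ℂ) + ℓ) (n / 2)
      else 0 := by
  have hLHS : (∑ k ∈ Finset.range (n + 1),
      (-(1/2) : ℂ) ^ k * (n.choose k : ℂ) * cbinom (2 * (k : ℂ) + 2 * ℓ) k
        / cbinom ((k : ℂ) + ℓ) k) = Fs ℓ n := by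
    apply Finset.sum_congr rfl
    intro k hk
    rw [tt, mul_div_assoc, cbinom_div, ← mul_div_assoc]
  rw [hLHS, show (if Even n then
        (2 : ℂ)⁻¹ ^ n * (n.choose (n / 2) : ℂ) / cbinom (((n / 2 : ℕ) : ℂ) + ℓ) (n / 2)
      else 0) = Rs ℓ n from rfl]
  by_cases hgood : ∀ m : ℕ, 1 ≤ m → m ≤ n → m % 2 = n % 2 → 2*ℓ + (m:ℂ) ≠ 0
  · exact good n ℓ hℓ hgood
  · push_neg at hgood
    obtain ⟨m0, hm1, hm2, hm3, hm4⟩ := hgood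
    have hnodd : ¬ Even n := by
      intro he
      have hn2 : n % 2 = 0 := Nat.even_iff.mp he
      have hm02 : m0 % 2 = 0 := by omega
      obtain ⟨a, ha⟩ : ∃ a, m0 = 2 * a := ⟨m0 / 2, by omega⟩
      exact hℓ a (by omega) (by omega) (by
        have : ((m0 : ℕ) : ℂ) = 2 * (a : ℂ) := by push_cast [ha]; ring
        rw [this] at hm4
        linear_combination hm4 / 2)
    rw [Rs, if_neg hnodd]
    -- ℓ is the bad point; use continuity
    have hev : ∀ᶠ z in nhdsWithin ℓ {ℓ}ᶜ, Fs z n = 0 := by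
      have h1 : ∀ᶠ z in nhdsWithin ℓ {ℓ}ᶜ, ∀ j ∈ Finset.Icc 1 n, z ≠ -((j:ℕ):ℂ) := by
        rw [Filter.eventually_all_finset]
        intro j hj
        simp only [Finset.mem_Icc] at hj
        have : ℓ ≠ -((j:ℕ):ℂ) := fun h => hℓ j hj.1 hj.2 (by rw [h]; ring)
        exact eventually_nhdsWithin_of_eventually_nhds (eventually_ne_nhds this)
      have h2 : ∀ᶠ z in nhdsWithin ℓ {ℓ}ᶜ, ∀ m ∈ Finset.Icc 1 n, z ≠ -((m:ℕ):ℂ)/2 := by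
        rw [Filter.eventually_all_finset]
        intro m hm
        by_cases hc : ℓ = -((m:ℕ):ℂ)/2
        · filter_upwards [self_mem_nhdsWithin] with z hz
          simp only [Set.mem_compl_iff, Set.mem_singleton_iff] at hz
          rw [← hc]; exact hz
        · exact eventually_nhdsWithin_of_eventually_nhds (eventually_ne_nhds hc)
      filter_upwards [h1, h2] with z hz1 hz2
      have hℓz : ∀ j : ℕ, 1 ≤ j → j ≤ n → z + (j:ℂ) ≠ 0 := by
        intro j hj1 hj2 h
        exact hz1 j (Finset.mem_Icc.mpr ⟨hj1, hj2⟩) (by linear_combination h)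
      have hoddz : ∀ m : ℕ, 1 ≤ m → m ≤ n → m % 2 = n % 2 → 2*z + (m:ℂ) ≠ 0 := by
        intro m h1' h2' _ h
        exact hz2 m (Finset.mem_Icc.mpr ⟨h1', h2'⟩) (by linear_combination h/2)
      rw [good n z hℓz hoddz, Rs, if_neg hnodd]
    have ht1 : Tendsto (fun z => Fs z n) (nhdsWithin ℓ {ℓ}ᶜ) (nhds (Fs ℓ n)) :=
      (Fs_contAt n ℓ hℓ).continuousWithinAt
    have ht2 : Tendsto (fun z => Fs z n) (nhdsWithin ℓ {ℓ}ᶜ) (nhds 0) :=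
      Filter.Tendsto.congr' (Filter.EventuallyEq.symm hev) tendsto_const_nhds
    exact tendsto_nhds_unique ht1 ht2
end

section
/- For every natural number n and every real number p > -1, ∫_0^1 x^p · P_n(2x-1) dx = Γ(p+1)^2 / (Γ(p-n+1) · Γ(p+n+2)), where P_n(2x-1) = ∑_{k=0}^{n} binom(n,k)^2 · (x-1)^{n-k} · x^k is the shifted Legendre polynomial and Γ is the real Gamma function (with the convention that the right-hand side is 0 when p-n+1 is a nonpositive integer, corresponding to the reciprocal Gamma function vanishing there). -/
open Finset MeasureTheory intervalIntegral Nat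

/-- The shifted Legendre polynomial `P_n(2x-1) = ∑_{k=0}^n binom(n,k)^2 (x-1)^{n-k} x^k`. -/
noncomputable def shiftedLegendre (n : ℕ) (x : ℝ) : ℝ :=
  ∑ k ∈ Finset.range (n + 1), (n.choose k : ℝ) ^ 2 * (x - 1) ^ (n - k) * x ^ k

namespace Stmt11Aux

noncomputable def cc (n k : ℕ) : ℝ := (-1) ^ (n + k) * (n.choose k : ℝ) ^ 2 * (Nat.factorial (n - k) : ℝ)

noncomputable def rr (p : ℝ) (k : ℕ) : ℝ := ∏ j ∈ Finset.range k, (p + 1 + j)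

lemma aux_int {a : ℝ} (ha : -1 < a) (m : ℕ) :
    IntervalIntegrable (fun x : ℝ => x ^ a * (1 - x) ^ m) volume 0 1 := by
  apply (intervalIntegral.intervalIntegrable_rpow' ha).mul_continuousOn
  exact ((continuous_const.sub continuous_id).pow m).continuousOn

lemma aux_I (m : ℕ) : ∀ a : ℝ, -1 < a →
    ∫ x in (0:ℝ)..1, x ^ a * (1 - x) ^ m
      = (m ! : ℝ) * Real.Gamma (a + 1) / Real.Gamma (a + m + 2) := by
  induction m with
  | zero =>
    intro a ha
    have h0 : ∫ x in (0:ℝ)..1, x ^ a * (1 - x) ^ 0 = 1 / (a + 1) := by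
      simp only [pow_zero, mul_one]
      rw [integral_rpow (Or.inl ha)]
      simp [Real.one_rpow, Real.zero_rpow (by linarith : a + 1 ≠ 0)]
    rw [h0]
    have h1 : a + (0:ℕ) + 2 = (a + 1) + 1 := by push_cast; ring
    rw [h1, Real.Gamma_add_one (by linarith : a + 1 ≠ 0)]
    have h2 : Real.Gamma (a + 1) ≠ 0 := (Real.Gamma_pos_of_pos (by linarith)).ne'
    simp only [Nat.factorial_zero, Nat.cast_one, one_mul]
    rw [mul_comm, ← div_div, div_self h2]
  | succ m ih =>
    intro a ha
    have ha1 : -1 < a + 1 := by linarith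
    have h1 : ∫ x in (0:ℝ)..1, x ^ a * (1 - x) ^ (m + 1)
        = (∫ x in (0:ℝ)..1, x ^ a * (1 - x) ^ m)
          - ∫ x in (0:ℝ)..1, x ^ (a + 1) * (1 - x) ^ m := by
      rw [← intervalIntegral.integral_sub (aux_int ha m) (aux_int ha1 m)]
      apply intervalIntegral.integral_congr
      intro x hx
      rw [Set.uIcc_of_le (by norm_num : (0:ℝ) ≤ 1)] at hx
      rcases eq_or_lt_of_le hx.1 with h0 | h0
      · simp [← h0, Real.zero_rpow (by linarith : a + 1 ≠ 0)]
      · have hx1 : x ^ (a + 1) = x ^ a * x := by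
          rw [Real.rpow_add_one (ne_of_gt h0)]
        simp only [hx1]; ring
    rw [h1, ih a ha, ih (a + 1) ha1]
    have g1 : Real.Gamma (a + 1 + 1) = (a + 1) * Real.Gamma (a + 1) :=
      Real.Gamma_add_one (by linarith)
    have g2 : a + (m:ℝ) + 2 > 0 := by
      have := Nat.cast_nonneg (α := ℝ) m; linarith
    have g3 : Real.Gamma (a + (m:ℝ) + 2 + 1) = (a + m + 2) * Real.Gamma (a + m + 2) :=
      Real.Gamma_add_one g2.ne'
    have e1 : a + 1 + (m:ℝ) + 2 = a + (m:ℝ) + 2 + 1 := by ring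
    have e2 : a + ((m:ℕ)+1 : ℕ) + 2 = a + (m:ℝ) + 2 + 1 := by push_cast; ring
    rw [e1, e2, g3, g1]
    have hG1 : Real.Gamma (a + 1) ≠ 0 := (Real.Gamma_pos_of_pos (by linarith)).ne'
    have hG2 : Real.Gamma (a + (m:ℝ) + 2) ≠ 0 := (Real.Gamma_pos_of_pos g2).ne'
    have hfac : ((m+1)! : ℝ) = (m + 1) * (m ! : ℝ) := by
      rw [Nat.factorial_succ]; push_cast; ring
    rw [hfac]
    field_simp
    ring

lemma key_fact (k m : ℕ) :
    (((k+m+2).choose (k+1) : ℝ))^2 * ((m+1)! : ℝ)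
      = (((k+m+1).choose k : ℝ))^2 * ((m+1)! : ℝ)
        + (2*(k:ℝ)+m+3) * (((k+m+1).choose (k+1) : ℝ))^2 * (m ! : ℝ) := by
  have h1 : ((k+m+1).choose k : ℝ) = ((k+m+1)! : ℝ) / ((k ! : ℝ) * ((m+1)! : ℝ)) := by
    rw [Nat.cast_choose ℝ (by omega), show k+m+1-k = m+1 by omega]
  have h2 : ((k+m+1).choose (k+1) : ℝ) = ((k+m+1)! : ℝ) / (((k+1)! : ℝ) * (m ! : ℝ)) := by
    rw [Nat.cast_choose ℝ (by omega), show k+m+1-(k+1) = m by omega]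
  have h3 : ((k+m+2).choose (k+1) : ℝ)
      = ((k:ℝ)+m+2) * ((k+m+1)! : ℝ) / (((k+1)! : ℝ) * ((m+1)! : ℝ)) := by
    rw [Nat.cast_choose ℝ (by omega), show k+m+2-(k+1) = m+1 by omega,
      show k+m+2 = (k+m+1)+1 by omega, Nat.factorial_succ]
    push_cast; ring
  have hm : ((m+1)! : ℝ) = ((m:ℝ)+1) * (m ! : ℝ) := by
    rw [Nat.factorial_succ]; push_cast; ring
  have hk : ((k+1)! : ℝ) = ((k:ℝ)+1) * (k ! : ℝ) := by
    rw [Nat.factorial_succ]; push_cast; ring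
  have f1 : (k ! : ℝ) ≠ 0 := Nat.cast_ne_zero.mpr (Nat.factorial_ne_zero k)
  have f2 : (m ! : ℝ) ≠ 0 := Nat.cast_ne_zero.mpr (Nat.factorial_ne_zero m)
  rw [h1, h2, h3, hm, hk]
  have hk1 : (k:ℝ) + 1 ≠ 0 := by positivity
  have hm1 : (m:ℝ) + 1 ≠ 0 := by positivity
  field_simp
  ring

lemma cc_zero (n k : ℕ) (h : n < k) : cc n k = 0 := by
  simp [cc, Nat.choose_eq_zero_of_lt h]

lemma cc_rec (n k : ℕ) : cc (n+1) (k+1) = cc n k - ((n:ℝ)+k+2) * cc n (k+1) := by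
  rcases lt_or_ge k n with h | h
  · obtain ⟨m, rfl⟩ : ∃ m, n = k + m + 1 := ⟨n - k - 1, by omega⟩
    unfold cc
    rw [show k+m+1+1-(k+1) = m+1 by omega, show k+m+1-k = m+1 by omega,
      show k+m+1-(k+1) = m by omega]
    have s1 : ((-1:ℝ))^(k+m+1+1+(k+1)) = -(-1:ℝ)^m := by
      rw [show k+m+1+1+(k+1) = m+1+2*(k+1) by omega, pow_add, pow_mul, neg_one_sq,
        one_pow, mul_one, pow_succ]
      ring
    have s2 : ((-1:ℝ))^(k+m+1+k) = -(-1:ℝ)^m := by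
      rw [show k+m+1+k = m+1+2*k by omega, pow_add, pow_mul, neg_one_sq,
        one_pow, mul_one, pow_succ]
      ring
    have s3 : ((-1:ℝ))^(k+m+1+(k+1)) = (-1:ℝ)^m := by
      rw [show k+m+1+(k+1) = m+2*(k+1) by omega, pow_add, pow_mul, neg_one_sq,
        one_pow, mul_one]
    rw [s1, s2, s3, show k+m+1+1 = k+m+2 by omega]
    push_cast
    linear_combination (-(-1:ℝ)^m) * key_fact k m
  · rcases h.eq_or_lt with rfl | h2
    · unfold cc
      rw [Nat.choose_self, Nat.choose_self, Nat.choose_succ_self, Nat.sub_self, Nat.sub_self,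
        show n+1+(n+1) = 2*(n+1) by omega, show n+n = 2*n by omega,
        pow_mul, pow_mul, neg_one_sq, one_pow, one_pow]
      simp
    · rw [cc_zero n k h2, cc_zero n (k+1) (by omega), cc_zero (n+1) (k+1) (by omega)]
      ring

lemma rr_succ (p : ℝ) (k : ℕ) : rr p (k+1) = rr p k * (p + 1 + k) := by
  rw [rr, rr, prod_range_succ]

lemma S_rec (n : ℕ) (p : ℝ) :
    ∑ k ∈ range (n+2), cc (n+1) k * rr p k
      = (p - n) * ∑ k ∈ range (n+1), cc n k * rr p k := by
  have hr : ∀ k : ℕ, (p - n) * rr p k = rr p (k+1) - ((n:ℝ)+k+1) * rr p k := by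
    intro k; rw [rr_succ]; ring
  have step1 : (p - n) * ∑ k ∈ range (n+1), cc n k * rr p k
      = (∑ k ∈ range (n+1), cc n k * rr p (k+1))
        - ∑ k ∈ range (n+1), ((n:ℝ)+k+1) * cc n k * rr p k := by
    rw [Finset.mul_sum, ← Finset.sum_sub_distrib]
    apply Finset.sum_congr rfl
    intro k _
    linear_combination cc n k * hr k
  have step2 : ∑ k ∈ range (n+1), ((n:ℝ)+k+1) * cc n k * rr p k
      = (∑ k ∈ range (n+1), ((n:ℝ)+k+2) * cc n (k+1) * rr p (k+1))
        + ((n:ℝ)+1) * cc n 0 * rr p 0 := by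
    rw [Finset.sum_range_succ' (fun k => ((n:ℝ)+k+1) * cc n k * rr p k) n]
    rw [Finset.sum_range_succ (fun k => ((n:ℝ)+k+2) * cc n (k+1) * rr p (k+1)) n]
    rw [cc_zero n (n+1) (by omega)]
    have hcongr : ∀ x ∈ range n,
        ((n:ℝ)+((x+1 : ℕ) : ℝ)+1) * cc n (x+1) * rr p (x+1)
          = ((n:ℝ)+(x:ℝ)+2) * cc n (x+1) * rr p (x+1) := by
      intro x _; push_cast; ring
    rw [Finset.sum_congr rfl hcongr]
    push_cast
    ring
  rw [step1, step2, Finset.sum_range_succ' (fun k => cc (n+1) k * rr p k) (n+1)]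
  have hc0 : cc (n+1) 0 * rr p 0 = -(((n:ℝ)+1) * cc n 0 * rr p 0) := by
    unfold cc
    rw [Nat.choose_zero_right, Nat.choose_zero_right, Nat.sub_zero, Nat.sub_zero,
      Nat.add_zero, Nat.add_zero, Nat.factorial_succ, pow_succ]
    push_cast
    ring
  rw [hc0]
  have hterm : ∀ k ∈ range (n+1),
      cc (n+1) (k+1) * rr p (k+1)
        = cc n k * rr p (k+1) - ((n:ℝ)+k+2) * cc n (k+1) * rr p (k+1) := by
    intro k _
    rw [cc_rec n k]; ring
  rw [Finset.sum_congr rfl hterm, Finset.sum_sub_distrib]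
  ring

lemma S_eq (n : ℕ) : ∀ p : ℝ, ∑ k ∈ range (n+1), cc n k * rr p k
    = ∏ j ∈ range n, (p - j) := by
  induction n with
  | zero => intro p; simp [cc, rr]
  | succ n ih =>
    intro p
    rw [S_rec n p, ih p, Finset.prod_range_succ]
    ring

lemma Gamma_rr (p : ℝ) (hp : -1 < p) (k : ℕ) :
    Real.Gamma (p + 1 + k) = Real.Gamma (p + 1) * rr p k := by
  induction k with
  | zero => simp [rr]
  | succ k ih =>
    have hk : (0:ℝ) ≤ k := Nat.cast_nonneg k
    have e : p + 1 + ((k:ℕ)+1:ℕ) = (p + 1 + k) + 1 := by push_cast; ring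
    rw [e, Real.Gamma_add_one (by linarith : p + 1 + (k:ℝ) ≠ 0), ih, rr_succ]
    ring

lemma Gamma_desc (p : ℝ) : ∀ n : ℕ, (∀ j ∈ range n, p - j ≠ 0) →
    Real.Gamma (p + 1) = Real.Gamma (p - n + 1) * ∏ j ∈ range n, (p - j) := by
  intro n
  induction n with
  | zero => intro _; simp
  | succ n ih =>
    intro h
    have hn : p - n ≠ 0 := h n (Finset.self_mem_range_succ n)
    rw [ih (fun j hj => h j (Finset.mem_range.mpr (by
      have := Finset.mem_range.mp hj; omega))), Finset.prod_range_succ]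
    have e : p - (n:ℝ) + 1 = (p - ((n:ℕ)+1:ℕ) + 1) + 1 := by push_cast; ring
    have e2 : p - ((n:ℕ)+1:ℕ) + 1 = p - n := by push_cast; ring
    rw [e, Real.Gamma_add_one (by rw [e2]; exact hn), e2]
    ring

end Stmt11Aux

/-- The moment formula (6) for shifted Legendre polynomials.  (Mathlib's `Real.Gamma`
vanishes at nonpositive integers, so when `p - n + 1` is a nonpositive integer the
right-hand side is `0`, matching the reciprocal-Gamma convention.) -/
theorem stmt_11 (n : ℕ) (p : ℝ) (hp : -1 < p) :
    ∫ x in (0 : ℝ)..1, x ^ p * shiftedLegendre n x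
    = Real.Gamma (p + 1) ^ 2 / (Real.Gamma (p - n + 1) * Real.Gamma (p + n + 2)) := by
  classical
  have hp1 : (0:ℝ) < p + 1 := by linarith
  have hpn2 : (0:ℝ) < p + n + 2 := by
    have := Nat.cast_nonneg (α := ℝ) n; linarith
  have hGpn2 : Real.Gamma (p + n + 2) ≠ 0 := (Real.Gamma_pos_of_pos hpn2).ne'
  have hGp1 : Real.Gamma (p + 1) ≠ 0 := (Real.Gamma_pos_of_pos hp1).ne'
  -- Step 1: rewrite integrand as a sum of beta-type integrands
  have hpk : ∀ k : ℕ, -1 < p + (k:ℝ) := by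
    intro k; have := Nat.cast_nonneg (α := ℝ) k; linarith
  have eqon : Set.EqOn (fun x : ℝ => x ^ p * shiftedLegendre n x)
      (fun x : ℝ => ∑ k ∈ Finset.range (n+1),
        ((n.choose k : ℝ)^2 * (-1)^(n+k)) * (x ^ (p + k) * (1-x)^(n-k)))
      (Set.uIcc 0 1) := by
    intro x hx
    rw [Set.uIcc_of_le (by norm_num : (0:ℝ) ≤ 1)] at hx
    simp only [shiftedLegendre, Finset.mul_sum]
    apply Finset.sum_congr rfl
    intro k hk
    have hk' : k ≤ n := by have := Finset.mem_range.mp hk; omega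
    have hsign : (x - 1)^(n-k) = (-1:ℝ)^(n+k) * (1-x)^(n-k) := by
      rw [show (x - 1) = -(1-x) by ring, neg_pow]
      congr 1
      rw [show n+k = (n-k) + 2*k by omega, pow_add, pow_mul, neg_one_sq, one_pow, mul_one]
    have hx0 : x ^ (p + (k:ℝ)) = x ^ p * x ^ k := by
      rcases eq_or_lt_of_le hx.1 with h0 | h0
      · rcases Nat.eq_zero_or_pos k with rfl | hkpos
        · simp
        · have hkR : (1:ℝ) ≤ k := by exact_mod_cast hkpos
          rw [← h0, Real.zero_rpow (by linarith : p + (k:ℝ) ≠ 0),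
            zero_pow (by omega : k ≠ 0), mul_zero]
      · rw [Real.rpow_add h0, Real.rpow_natCast]
    rw [hsign, hx0]
    ring
  rw [intervalIntegral.integral_congr eqon]
  have hInt : ∀ k ∈ Finset.range (n+1), IntervalIntegrable
      (fun x : ℝ => ((n.choose k : ℝ)^2 * (-1)^(n+k)) * (x ^ (p + k) * (1-x)^(n-k)))
      volume 0 1 := by
    intro k _
    exact (Stmt11Aux.aux_int (hpk k) (n-k)).const_mul _
  rw [intervalIntegral.integral_finset_sum hInt]
  simp_rw [intervalIntegral.integral_const_mul]
  -- Step 2: evaluate each integral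
  have hval : ∀ k ∈ Finset.range (n+1),
      ((n.choose k : ℝ)^2 * (-1)^(n+k)) *
        ∫ x in (0:ℝ)..1, x ^ (p + k) * (1-x)^(n-k)
      = Real.Gamma (p+1) / Real.Gamma (p + n + 2) * (Stmt11Aux.cc n k * Stmt11Aux.rr p k) := by
    intro k hk
    have hk' : k ≤ n := by have := Finset.mem_range.mp hk; omega
    rw [Stmt11Aux.aux_I (n-k) (p + k) (hpk k)]
    have e1 : p + (k:ℝ) + ((n-k:ℕ):ℝ) + 2 = p + n + 2 := by
      rw [Nat.cast_sub hk']; ring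
    have e2 : p + (k:ℝ) + 1 = p + 1 + k := by ring
    rw [e1, e2, Stmt11Aux.Gamma_rr p hp k]
    unfold Stmt11Aux.cc
    ring
  rw [Finset.sum_congr rfl hval, ← Finset.mul_sum, Stmt11Aux.S_eq n p]
  -- Step 3: final Gamma algebra
  by_cases hz : Real.Gamma (p - n + 1) = 0
  · obtain ⟨m, hm⟩ := (Real.Gamma_eq_zero_iff _).mp hz
    have hmn : m < n := by
      by_contra hcon
      push_neg at hcon
      have : (n:ℝ) ≤ m := by exact_mod_cast hcon
      have : p ≤ -1 := by linarith [hm, this]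
      linarith
    have hprod : ∏ j ∈ Finset.range n, (p - j) = 0 := by
      apply Finset.prod_eq_zero (Finset.mem_range.mpr (by omega : n - 1 - m < n))
      have : ((n - 1 - m : ℕ) : ℝ) = (n:ℝ) - 1 - m := by
        push_cast [Nat.cast_sub (by omega : m ≤ n - 1), Nat.cast_sub (by omega : 1 ≤ n)]
        ring
      rw [this]
      linarith [hm]
    rw [hprod, hz]
    simp
  · have hall : ∀ j ∈ Finset.range n, p - j ≠ 0 := by
      intro j hj hpj
      have hjn : j < n := Finset.mem_range.mp hj
      apply hz
      have : p - n + 1 = -((n - 1 - j : ℕ) : ℝ) := by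
        have hc : ((n - 1 - j : ℕ) : ℝ) = (n:ℝ) - 1 - j := by
          push_cast [Nat.cast_sub (by omega : j ≤ n - 1), Nat.cast_sub (by omega : 1 ≤ n)]
          ring
        rw [hc]; linarith [hpj]
      rw [this]
      exact Real.Gamma_neg_nat_eq_zero _
    have hdesc := Stmt11Aux.Gamma_desc p n hall
    rw [hdesc]
    field_simp
end

section
/- For every natural number n, ∑_{k=0}^{n} (-1/2)^k · binom(n,k) · binom(2k,k) equals 2^{-n} · binom(n, n/2) if n is even, and equals 0 if n is odd. -/
open Finset

private noncomputable def RD (n : ℕ) : ℝ :=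
  ∑ k ∈ Finset.range (n + 1),
      (-(1/2) : ℝ) ^ k * (n.choose k : ℝ) * ((2 * k).choose k : ℝ)

/-- central binomial recurrence, cast to ℝ -/
private lemma cb_rec (k : ℕ) :
    ((2 * (k+1)).choose (k+1) : ℝ) * (k+1) = 2 * (2*k+1) * ((2*k).choose k : ℝ) := by
  have h := Nat.succ_mul_centralBinom_succ k
  unfold Nat.centralBinom at h
  have := congrArg (Nat.cast (R := ℝ)) h
  push_cast at this
  linarith

/-- choose right-shift, cast to ℝ -/
private lemma ch_right (n k : ℕ) :
    ((k:ℝ)+1) * ((n+2).choose (k+1) : ℝ) = ((n:ℝ)+2-k) * ((n+2).choose k : ℝ) := by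
  rcases le_or_gt k (n+2) with h | h
  · have hnat := Nat.choose_succ_right_eq (n+2) k
    have := congrArg (Nat.cast (R := ℝ)) hnat
    push_cast [Nat.cast_sub h] at this
    linarith
  · rw [Nat.choose_eq_zero_of_lt h, Nat.choose_eq_zero_of_lt (by omega)]
    push_cast; ring

/-- climbing choose by two, cast to ℝ -/
private lemma ch_two (n k : ℕ) :
    ((n:ℝ)+1) * ((n:ℝ)+2) * (n.choose k : ℝ)
      = ((n:ℝ)+2-k) * ((n:ℝ)+1-k) * ((n+2).choose k : ℝ) := by
  rcases le_or_gt k (n+1) with h | h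
  · have h1 := Nat.choose_mul_succ_eq n k
    have h2 := Nat.choose_mul_succ_eq (n+1) k
    have e1 := congrArg (Nat.cast (R := ℝ)) h1
    have e2 := congrArg (Nat.cast (R := ℝ)) h2
    push_cast [Nat.cast_sub (by omega : k ≤ n + 1), Nat.cast_sub (by omega : k ≤ n + 2)] at e1 e2
    have : ((n:ℝ)+1-k) ≥ 0 := by
      have : (k:ℝ) ≤ (n:ℝ)+1 := by exact_mod_cast h
      linarith
    nlinarith [e1, e2]
  · rcases le_or_gt k (n+2) with h' | h'
    · have hk : k = n + 2 := by omega
      subst hk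
      rw [Nat.choose_eq_zero_of_lt (by omega)]
      push_cast; ring
    · rw [Nat.choose_eq_zero_of_lt (by omega), Nat.choose_eq_zero_of_lt h']
      push_cast; ring

/-- The certificate identity (Zeilberger). -/
private lemma cert (n k : ℕ) :
    ((n:ℝ)+2) * (((n:ℝ)+2) * ((-(1/2) : ℝ) ^ k * ((n+2).choose k : ℝ) * ((2 * k).choose k : ℝ))
      - ((n:ℝ)+1) * ((-(1/2) : ℝ) ^ k * (n.choose k : ℝ) * ((2 * k).choose k : ℝ)))
    = (-((k:ℝ)+1)^2 * (-(1/2) : ℝ) ^ (k+1) * ((n+2).choose (k+1) : ℝ) * ((2 * (k+1)).choose (k+1) : ℝ))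
      - (-(k:ℝ)^2 * (-(1/2) : ℝ) ^ k * ((n+2).choose k : ℝ) * ((2 * k).choose k : ℝ)) := by
  have e := ch_two n k
  have d := ch_right n k
  have c2 := cb_rec k
  have hp : (-(1/2) : ℝ) ^ (k+1) = (-(1/2) : ℝ) ^ k * (-(1/2)) := by ring
  rw [hp]
  set P : ℝ := (-(1/2) : ℝ) ^ k
  set A : ℝ := ((n+2).choose k : ℝ)
  set A' : ℝ := ((n+2).choose (k+1) : ℝ)
  set c : ℝ := ((2 * k).choose k : ℝ)
  set c' : ℝ := ((2 * (k+1)).choose (k+1) : ℝ)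
  linear_combination (-P*c) * e + (-(1/2:ℝ)*P*c'*((k:ℝ)+1)) * d + (-(1/2:ℝ)*P*(((n:ℝ)+2)-k)*A) * c2

/-- The recurrence (n+2) RD (n+2) = (n+1) RD n. -/
private lemma rd_rec (n : ℕ) : ((n:ℝ)+2) * RD (n+2) = ((n:ℝ)+1) * RD n := by
  have hG : ∀ N : ℕ,
      ∑ k ∈ range N, (((-((k:ℝ)+1)^2 * (-(1/2) : ℝ) ^ (k+1) * ((n+2).choose (k+1) : ℝ) * ((2 * (k+1)).choose (k+1) : ℝ)))
        - (-(k:ℝ)^2 * (-(1/2) : ℝ) ^ k * ((n+2).choose k : ℝ) * ((2 * k).choose k : ℝ)))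
      = (-((N:ℝ))^2 * (-(1/2) : ℝ) ^ N * ((n+2).choose N : ℝ) * ((2 * N).choose N : ℝ)) - 0 := by
    intro N
    have := Finset.sum_range_sub
      (f := fun k : ℕ => (-(k:ℝ)^2 * (-(1/2) : ℝ) ^ k * ((n+2).choose k : ℝ) * ((2 * k).choose k : ℝ))) N
    simpa using this
  have htel := hG (n+3)
  rw [Nat.choose_eq_zero_of_lt (by omega : n + 2 < n + 3)] at htel
  have hsum : ∑ k ∈ range (n+3),
      ((n:ℝ)+2) * (((n:ℝ)+2) * ((-(1/2) : ℝ) ^ k * ((n+2).choose k : ℝ) * ((2 * k).choose k : ℝ))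
        - ((n:ℝ)+1) * ((-(1/2) : ℝ) ^ k * (n.choose k : ℝ) * ((2 * k).choose k : ℝ))) = 0 := by
    rw [Finset.sum_congr rfl (fun k _ => cert n k)]
    rw [htel]; push_cast; ring
  have hRD2 : RD (n+2) = ∑ k ∈ range (n+3),
      (-(1/2) : ℝ) ^ k * ((n+2).choose k : ℝ) * ((2 * k).choose k : ℝ) := by
    unfold RD
    congr 1
  have hRDn : (∑ k ∈ range (n+3),
      (-(1/2) : ℝ) ^ k * (n.choose k : ℝ) * ((2 * k).choose k : ℝ)) = RD n := by
    unfold RD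
    symm
    apply Finset.sum_subset
    · intro x hx
      simp only [Finset.mem_range] at *
      omega
    · intro x _ hx
      simp only [Finset.mem_range] at hx
      rw [Nat.choose_eq_zero_of_lt (by omega)]
      simp
  have expand : ∑ k ∈ range (n+3),
      ((n:ℝ)+2) * (((n:ℝ)+2) * ((-(1/2) : ℝ) ^ k * ((n+2).choose k : ℝ) * ((2 * k).choose k : ℝ))
        - ((n:ℝ)+1) * ((-(1/2) : ℝ) ^ k * (n.choose k : ℝ) * ((2 * k).choose k : ℝ)))
      = ((n:ℝ)+2) * (((n:ℝ)+2) * RD (n+2) - ((n:ℝ)+1) * RD n) := by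
    rw [hRD2, ← hRDn, Finset.mul_sum, Finset.mul_sum, ← Finset.sum_sub_distrib, Finset.mul_sum]
  rw [expand] at hsum
  have hne : ((n:ℝ)+2) ≠ 0 := by positivity
  have := mul_eq_zero.mp hsum
  rcases this with h | h
  · exact absurd h hne
  · linarith

private lemma rd_closed (n : ℕ) :
    RD n = if Even n then (2 : ℝ)⁻¹ ^ n * (n.choose (n / 2) : ℝ) else 0 := by
  induction n using Nat.twoStepInduction with
  | zero => simp [RD]
  | one =>
      have : ¬ Even 1 := by decide
      simp [RD, Finset.sum_range_succ, this]
  | more n ih _ =>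
      have hrec := rd_rec n
      have hne : ((n:ℝ)+2) ≠ 0 := by positivity
      by_cases hev : Even n
      · have hev2 : Even (n+2) := by simp [Nat.even_iff] at hev ⊢; omega
        rw [if_pos hev] at ih
        rw [if_pos hev2]
        obtain ⟨m, hm⟩ := hev
        subst hm
        have hd1 : (m + m) / 2 = m := by omega
        have hd2 : (m + m + 2) / 2 = m + 1 := by omega
        rw [hd2]
        rw [hd1] at ih
        -- central binomial step
        have hcb := Nat.succ_mul_centralBinom_succ m
        unfold Nat.centralBinom at hcb
        have hcb' := congrArg (Nat.cast (R := ℝ)) hcb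
        push_cast at hcb'
        have hch1 : ((m + m + 2).choose (m+1) : ℝ) = ((2*(m+1)).choose (m+1) : ℝ) := by
          norm_num; ring_nf
        have hch2 : ((m + m).choose m : ℝ) = ((2*m).choose m : ℝ) := by
          norm_num; ring_nf
        rw [ih] at hrec
        -- goal: RD (m+m+2) = 2⁻¹ ^ (m+m+2) * choose
        have h2 : (2:ℝ)⁻¹ ^ (m + m + 2) = (2:ℝ)⁻¹ ^ (m + m) * (1/4) := by
          rw [pow_add]; norm_num
        rw [h2]
        have hpos : (0:ℝ) < (2:ℝ)⁻¹ ^ (m+m) := by positivity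
        -- from hrec : (n+2) * RD (n+2) = (n+1) * 2⁻¹^n * C(n, m)
        -- want RD (n+2) = 2⁻¹^n * (1/4) * C(n+2, m+1)
        have key : ((m:ℝ)+(m:ℝ)+2) * ((2:ℝ)⁻¹ ^ (m + m) * (1/4) * ((m + m + 2).choose (m+1) : ℝ))
            = ((m:ℝ)+(m:ℝ)+1) * ((2:ℝ)⁻¹ ^ (m + m) * ((m + m).choose m : ℝ)) := by
          rw [hch1, hch2]
          nlinarith [hcb', hpos]
        have hne' : ((m:ℝ)+(m:ℝ)+2) ≠ 0 := by positivity
        push_cast at hrec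
        have := hrec.trans key.symm
        field_simp at this ⊢
        nlinarith [this, hne']
      · have hev2 : ¬ Even (n+2) := by simp [Nat.even_iff] at hev ⊢; omega
        rw [if_neg hev] at ih
        rw [if_neg hev2]
        rw [ih, mul_zero] at hrec
        have := mul_eq_zero.mp hrec
        tauto

/-- The Reed Dawson identity (Knuth's old sum). -/
theorem stmt_12 (n : ℕ) :
    ∑ k ∈ Finset.range (n + 1),
      (-(1/2) : ℝ) ^ k * (n.choose k : ℝ) * ((2 * k).choose k : ℝ)
    = if Even n then (2 : ℝ)⁻¹ ^ n * (n.choose (n / 2) : ℝ) else 0 := by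
  exact rd_closed n
end

section
/- Let n be a natural number and let ℓ be a complex number such that k + 2ℓ + 1 ≠ 0 for every integer k with 0 ≤ k ≤ n. Then ∑_{k=0}^{n} (-1/2)^k · C(n+ℓ, n-k) · C(2k+2ℓ, k) · k(n-k)/(k+2ℓ+1) equals -2^{-n} · n · C(n+ℓ, n/2) if n is even, and equals 0 if n is odd. -/
set_option maxHeartbeats 1000000

lemma natc_ne (m : ℕ) (h : m ≠ 0) : ((m : ℂ)) ≠ 0 := Nat.cast_ne_zero.2 h

lemma cbinom_zero (z : ℂ) : cbinom z 0 = 1 := by simp [cbinom]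

lemma cbinom_succ (z : ℂ) (m : ℕ) :
    cbinom z (m+1) * ((m : ℂ) + 1) = cbinom z m * (z - m) := by
  have h1 : ((Nat.factorial m : ℂ)) ≠ 0 := Nat.cast_ne_zero.2 (Nat.factorial_ne_zero m)
  have h2 : ((m : ℂ) + 1) ≠ 0 := by
    have := natc_ne (m+1) (by omega); push_cast at this; exact this
  unfold cbinom
  rw [Finset.prod_range_succ, Nat.factorial_succ]
  push_cast
  field_simp

lemma cbinom_shift2 (z : ℂ) (m : ℕ) :
    cbinom (z+2) (m+2) * (((m : ℂ)+2) * ((m : ℂ)+1)) = (z+2) * (z+1) * cbinom z m := by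
  have h1 : ((Nat.factorial m : ℂ)) ≠ 0 := Nat.cast_ne_zero.2 (Nat.factorial_ne_zero m)
  have h2 : ((m : ℂ) + 1) ≠ 0 := by
    have := natc_ne (m+1) (by omega); push_cast at this; exact this
  have h4 : ((m : ℂ) + 1 + 1) ≠ 0 := by
    have := natc_ne (m+2) (by omega); push_cast at this
    intro h; exact this (by linear_combination h)
  have hprod : ∏ j ∈ Finset.range (m+2), (z + 2 - (j : ℂ))
      = (z+2) * (z+1) * ∏ j ∈ Finset.range m, (z - (j : ℂ)) := by
    rw [Finset.prod_range_succ', Finset.prod_range_succ']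
    have : ∀ j ∈ Finset.range m, (z + 2 - ((j + 1 + 1 : ℕ) : ℂ)) = z - j := by
      intro j _; push_cast; ring
    rw [Finset.prod_congr rfl this]
    push_cast; ring
  unfold cbinom
  rw [hprod, show m+2 = m+1+1 from rfl, Nat.factorial_succ, Nat.factorial_succ]
  push_cast
  field_simp
  ring

lemma cbinom_prod2 (z : ℂ) (m : ℕ) :
    cbinom (z+2) (m+1) * (((m : ℂ)+1) * (z + 1 - m)) = (z+2) * (z+1) * cbinom z m := by
  cases m with
  | zero => simp [cbinom]
  | succ m' =>
      have hne : ((m' : ℂ) + 1) ≠ 0 := by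
        have := natc_ne (m'+1) (by omega); push_cast at this; exact this
      apply mul_right_cancel₀ hne
      have hs := cbinom_shift2 z m'
      have hc := cbinom_succ z m'
      push_cast
      linear_combination (z - (m' : ℂ)) * hs - (z+2)*(z+1)*hc

noncomputable def Fk (ℓ : ℂ) (n k : ℕ) : ℂ :=
  (-(1/2) : ℂ) ^ k * cbinom ((n : ℂ) + ℓ) (n - k) * cbinom (2 * (k : ℂ) + 2 * ℓ) k

noncomputable def Tn (ℓ : ℂ) (n : ℕ) : ℂ := ∑ k ∈ Finset.range (n+1), Fk ℓ n k

noncomputable def Wk (ℓ : ℂ) (n m : ℕ) : ℂ :=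
  ((n : ℂ) - m) * (2*(m:ℂ) + 2*ℓ + 1) * Fk ℓ n m

noncomputable def Gk (ℓ : ℂ) (n m : ℕ) : ℂ :=
  Wk ℓ n m / ((m:ℂ) + 2*ℓ + 1)

/-- shift relation between `Fk ℓ n k` and `Fk ℓ (n+2) k` for `k ≤ n`. -/
lemma Fk_shift (ℓ : ℂ) (n k : ℕ) (hk : k ≤ n) :
    ((n:ℂ) + 2 - k) * ((n:ℂ) + 1 - k) * Fk ℓ (n+2) k
      = ((n:ℂ) + 2 + ℓ) * ((n:ℂ) + 1 + ℓ) * Fk ℓ n k := by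
  unfold Fk
  rw [show ((n+2 : ℕ) : ℂ) + ℓ = ((n:ℂ) + ℓ) + 2 from by push_cast; ring,
      show n + 2 - k = (n - k) + 2 from by omega]
  have hs := cbinom_shift2 ((n:ℂ) + ℓ) (n - k)
  rw [Nat.cast_sub hk] at hs
  linear_combination ((-(1/2) : ℂ)) ^ k * cbinom (2 * (k : ℂ) + 2 * ℓ) k * hs

lemma keyB (ℓ : ℂ) (n j : ℕ) (hj : j + 1 ≤ n) (h0 : (j:ℂ) + 2*ℓ + 1 ≠ 0) :
    Wk ℓ n (j+1) - Wk ℓ n j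
      = ((n:ℂ)*((n:ℂ)+2*ℓ) - ((n:ℂ)-((j:ℂ)+1))*((n:ℂ)-((j:ℂ)+2))) * Fk ℓ n (j+1) := by
  have hnj : (n:ℂ) - j ≠ 0 := by
    have := natc_ne (n - j) (by omega)
    rwa [Nat.cast_sub (by omega)] at this
  have hj1c : ((j:ℂ) + 1) ≠ 0 := by
    have := natc_ne (j+1) (by omega); push_cast at this; exact this
  have hA' : cbinom ((n:ℂ)+ℓ) (n-j)
      = cbinom ((n:ℂ)+ℓ) (n-(j+1)) * (ℓ + (j:ℂ) + 1) / ((n:ℂ) - j) := by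
    rw [eq_div_iff hnj]
    have hs := cbinom_succ ((n:ℂ)+ℓ) (n-(j+1))
    rw [show n-(j+1)+1 = n-j from by omega] at hs; push_cast [Nat.cast_sub hj] at hs
    linear_combination hs
  have hCk : cbinom (2*(((j+1):ℕ):ℂ) + 2*ℓ) (j+1)
      = (2*(j:ℂ)+2*ℓ+2)*(2*(j:ℂ)+2*ℓ+1) * cbinom (2*(j:ℂ)+2*ℓ) j
        / (((j:ℂ)+1)*((j:ℂ)+2*ℓ+1)) := by
    rw [show (2*(((j+1):ℕ):ℂ) + 2*ℓ) = (2*(j:ℂ)+2*ℓ)+2 from by push_cast; ring,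
        eq_div_iff (mul_ne_zero hj1c h0)]
    have hp := cbinom_prod2 (2*(j:ℂ)+2*ℓ) j
    linear_combination hp
  unfold Wk Fk
  rw [hCk, hA', pow_succ]
  push_cast
  field_simp
  ring

lemma keyCore (ℓ : ℂ) (n j : ℕ) (hj : j + 1 ≤ n) :
    Wk ℓ n (j+1) * ((j:ℂ) + 2*ℓ + 1) - Wk ℓ n j * ((j:ℂ) + 1 + 2*ℓ + 1)
      = Fk ℓ n (j+1) * (((j:ℂ)+1) * ((n:ℂ) - (j:ℂ) - 1) + n * ((j:ℂ) + 1 + 2*ℓ + 1))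
          * ((j:ℂ) + 2*ℓ + 1) := by
  have hs := cbinom_succ ((n:ℂ)+ℓ) (n-(j+1))
  rw [show n-(j+1)+1 = n-j from by omega] at hs
  push_cast [Nat.cast_sub hj] at hs
  have hp := cbinom_prod2 (2*(j:ℂ)+2*ℓ) j
  unfold Wk Fk
  rw [show (2*(((j+1):ℕ):ℂ) + 2*ℓ) = 2*(j:ℂ)+2*ℓ+2 from by push_cast; ring]
  push_cast
  linear_combination
    (-(2*(j:ℂ)+2*ℓ+1) * ((-(1/2):ℂ))^j * cbinom (2*(j:ℂ)+2*ℓ) j * ((j:ℂ)+2*ℓ+2)) * hs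
    + ((1/2) * ((-(1/2):ℂ))^j * ((j:ℂ)+2*ℓ+2) * cbinom ((n:ℂ)+ℓ) (n-(j+1))) * hp

lemma keyA (ℓ : ℂ) (n j : ℕ) (hj : j + 1 ≤ n) (h0 : (j:ℂ) + 2*ℓ + 1 ≠ 0)
    (h1 : (((j+1):ℕ):ℂ) + 2*ℓ + 1 ≠ 0) :
    Gk ℓ n (j+1) - Gk ℓ n j
      = Fk ℓ n (j+1) * ((((j+1):ℕ):ℂ) * ((n:ℂ) - (((j+1):ℕ):ℂ)) / ((((j+1):ℕ):ℂ) + 2*ℓ + 1) + n) := by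
  push_cast at h1
  have hc := keyCore ℓ n j hj
  unfold Gk
  push_cast
  rw [div_sub_div _ _ h1 h0, div_eq_iff (mul_ne_zero h1 h0)]
  have e2 : Fk ℓ n (j+1) * (((j:ℂ)+1)*((n:ℂ)-((j:ℂ)+1))/((j:ℂ)+1+2*ℓ+1) + (n:ℂ))
        * (((j:ℂ)+1+2*ℓ+1)*((j:ℂ)+2*ℓ+1))
      = Fk ℓ n (j+1) * ((((j:ℂ)+1)*((n:ℂ)-(j:ℂ)-1) + (n:ℂ)*((j:ℂ)+1+2*ℓ+1)) * ((j:ℂ)+2*ℓ+1)) := by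
    rw [div_add' _ _ _ h1, mul_assoc, div_mul_eq_mul_div, mul_div_assoc,
        mul_comm ((j:ℂ)+1+2*ℓ+1) ((j:ℂ)+2*ℓ+1), mul_div_assoc, div_self h1, mul_one]
    ring
  rw [e2]
  linear_combination hc

lemma cbinom_one (z : ℂ) : cbinom z 1 = z := by simp [cbinom]

lemma sumB (ℓ : ℂ) (n : ℕ) (hℓ : ∀ k : ℕ, k ≤ n → (k:ℂ)+2*ℓ+1 ≠ 0) :
    ∀ m, m ≤ n →
      ∑ k ∈ Finset.range (m+1),
        (((n:ℂ)*((n:ℂ)+2*ℓ) - ((n:ℂ)-(k:ℂ))*((n:ℂ)-(k:ℂ)-1)) * Fk ℓ n k) = Wk ℓ n m := by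
  intro m
  induction m with
  | zero =>
      intro _
      rw [Finset.sum_range_one]
      unfold Wk
      push_cast
      ring
  | succ j ih =>
      intro hjn
      rw [Finset.sum_range_succ, ih (by omega)]
      have hk := keyB ℓ n j hjn (hℓ j (by omega))
      push_cast
      linear_combination -hk

lemma sumA (ℓ : ℂ) (n : ℕ) (hℓ : ∀ k : ℕ, k ≤ n → (k:ℂ)+2*ℓ+1 ≠ 0) :
    ∀ m, m ≤ n →
      ∑ k ∈ Finset.range (m+1),
        (Fk ℓ n k * ((k:ℂ)*((n:ℂ)-(k:ℂ))/((k:ℂ)+2*ℓ+1) + n)) = Gk ℓ n m := by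
  intro m
  induction m with
  | zero =>
      intro _
      rw [Finset.sum_range_one]
      have h0 := hℓ 0 (by omega)
      unfold Gk Wk
      simp only [Nat.cast_zero, zero_mul, zero_div, zero_add, mul_zero, sub_zero] at h0 ⊢
      rw [eq_div_iff h0]
      ring
  | succ j ih =>
      intro hjn
      rw [Finset.sum_range_succ, ih (by omega)]
      have hk := keyA ℓ n j hjn (hℓ j (by omega)) (hℓ (j+1) (by omega))
      linear_combination -hk

lemma Trec (ℓ : ℂ) (n : ℕ) (hℓ : ∀ k : ℕ, k ≤ n+2 → (k:ℂ)+2*ℓ+1 ≠ 0) :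
    ((n:ℂ)+2)*((n:ℂ)+2+2*ℓ) * Tn ℓ (n+2) = ((n:ℂ)+2+ℓ)*((n:ℂ)+1+ℓ) * Tn ℓ n := by
  have hs := sumB ℓ (n+2) hℓ (n+2) le_rfl
  have hW : Wk ℓ (n+2) (n+2) = 0 := by simp [Wk]
  rw [hW] at hs
  have hsplit :
      ∑ k ∈ Finset.range (n+2+1),
        (((((n+2:ℕ)):ℂ)*((((n+2:ℕ)):ℂ)+2*ℓ)
            - ((((n+2:ℕ)):ℂ)-(k:ℂ))*((((n+2:ℕ)):ℂ)-(k:ℂ)-1)) * Fk ℓ (n+2) k)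
      = (((n:ℂ)+2)*((n:ℂ)+2+2*ℓ)) * Tn ℓ (n+2)
        - ∑ k ∈ Finset.range (n+2+1),
            ((((n:ℂ)+2-(k:ℂ))*((n:ℂ)+1-(k:ℂ))) * Fk ℓ (n+2) k) := by
    unfold Tn
    rw [Finset.mul_sum, ← Finset.sum_sub_distrib]
    apply Finset.sum_congr rfl
    intro k _
    push_cast
    ring
  rw [hsplit] at hs
  have h2 : ∑ k ∈ Finset.range (n+2+1),
      ((((n:ℂ)+2-(k:ℂ))*((n:ℂ)+1-(k:ℂ))) * Fk ℓ (n+2) k)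
      = ((n:ℂ)+2+ℓ)*((n:ℂ)+1+ℓ) * Tn ℓ n := by
    rw [show n+2+1 = (n+1)+1+1 from rfl, Finset.sum_range_succ, Finset.sum_range_succ]
    have z1 : (((n:ℂ)+2-((n+1+1:ℕ):ℂ))*((n:ℂ)+1-((n+1+1:ℕ):ℂ))) * Fk ℓ (n+2) (n+1+1) = 0 := by
      push_cast; ring
    have z2 : (((n:ℂ)+2-((n+1:ℕ):ℂ))*((n:ℂ)+1-((n+1:ℕ):ℂ))) * Fk ℓ (n+2) (n+1) = 0 := by
      push_cast; ring
    rw [z1, z2, add_zero, add_zero]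
    unfold Tn
    rw [Finset.mul_sum]
    apply Finset.sum_congr rfl
    intro k hk
    have hkn : k ≤ n := Nat.lt_succ_iff.1 (Finset.mem_range.1 hk)
    have hsh := Fk_shift ℓ n k hkn
    linear_combination hsh
  rw [h2] at hs
  linear_combination hs

lemma Tclosed : ∀ (n : ℕ) (ℓ : ℂ), (∀ k : ℕ, k ≤ n → (k:ℂ)+2*ℓ+1 ≠ 0) →
    Tn ℓ n = if Even n then (2:ℂ)⁻¹^n * cbinom ((n:ℂ)+ℓ) (n/2) else 0 := by
  intro n
  induction n using Nat.twoStepInduction with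
  | zero =>
      intro ℓ _
      rw [if_pos (Even.zero)]
      unfold Tn
      rw [Finset.sum_range_one]
      unfold Fk
      simp [cbinom_zero]
  | one =>
      intro ℓ _
      rw [if_neg (by decide : ¬ Even 1)]
      unfold Tn
      rw [Finset.sum_range_succ, Finset.sum_range_one]
      unfold Fk
      norm_num [cbinom_zero, cbinom_one]
      ring
  | more m ih _ =>
      intro ℓ h
      have h' : ∀ k : ℕ, k ≤ m → (k:ℂ)+2*ℓ+1 ≠ 0 := fun k hk => h k (by omega)
      have hrec := Trec ℓ m h
      have hT := ih ℓ h'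
      have hc2 : ((m:ℂ)+2)*((m:ℂ)+2+2*ℓ) ≠ 0 := by
        apply mul_ne_zero
        · have := natc_ne (m+2) (by omega); push_cast at this; exact this
        · have hh := h (m+1) (by omega); push_cast at hh
          intro hx; exact hh (by linear_combination hx)
      apply mul_left_cancel₀ hc2
      rw [hrec, hT]
      by_cases he : Even m
      · have he2 : Even (m+2) := by rcases he with ⟨t,ht⟩; exact ⟨t+1, by omega⟩
        rw [if_pos he, if_pos he2]
        obtain ⟨t, ht⟩ := he
        have hdiv2 : (m+2)/2 = t+1 := by omega
        have hdiv1 : m/2 = t := by omega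
        rw [hdiv2, hdiv1]
        rw [show ((m+2:ℕ):ℂ)+ℓ = ((m:ℂ)+ℓ)+2 from by push_cast; ring]
        have hmc : (m:ℂ) = (t:ℂ)+(t:ℂ) := by exact_mod_cast congrArg (Nat.cast (R := ℂ)) ht
        rw [hmc]
        have hp := cbinom_prod2 ((t:ℂ)+(t:ℂ)+ℓ) t
        rw [show ((2:ℂ)⁻¹)^(m+2) = (2:ℂ)⁻¹^m * (2⁻¹*2⁻¹) from by rw [pow_succ, pow_succ]; ring]
        linear_combination (-((2:ℂ)⁻¹)^m) * hp
      · have he2 : ¬ Even (m+2) := by rintro ⟨t,ht⟩; exact he ⟨t-1, by omega⟩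
        rw [if_neg he, if_neg he2, mul_zero, mul_zero]

/-- A Reed Dawson-like identity derived in Section 5 of the paper via the modified
Abel lemma on summation by parts. -/
theorem stmt_13 (n : ℕ) (ℓ : ℂ) (hℓ : ∀ k : ℕ, k ≤ n → (k : ℂ) + 2 * ℓ + 1 ≠ 0) :
    ∑ k ∈ Finset.range (n + 1),
      (-(1/2) : ℂ) ^ k * cbinom ((n : ℂ) + ℓ) (n - k) * cbinom (2 * (k : ℂ) + 2 * ℓ) k
        * ((k : ℂ) * ((n - k : ℕ) : ℂ)) / ((k : ℂ) + 2 * ℓ + 1)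
    = if Even n then -((2 : ℂ)⁻¹ ^ n) * (n : ℂ) * cbinom ((n : ℂ) + ℓ) (n / 2) else 0 := by
  have hsum : ∀ k ∈ Finset.range (n+1),
      (-(1/2) : ℂ) ^ k * cbinom ((n : ℂ) + ℓ) (n - k) * cbinom (2 * (k : ℂ) + 2 * ℓ) k
        * ((k : ℂ) * ((n - k : ℕ) : ℂ)) / ((k : ℂ) + 2 * ℓ + 1)
      = Fk ℓ n k * ((k:ℂ)*((n:ℂ)-(k:ℂ))/((k:ℂ)+2*ℓ+1) + n) - (n:ℂ) * Fk ℓ n k := by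
    intro k hk
    have hkn : k ≤ n := Nat.lt_succ_iff.1 (Finset.mem_range.1 hk)
    have hd := hℓ k hkn
    unfold Fk
    rw [Nat.cast_sub hkn]
    field_simp
    ring
  rw [Finset.sum_congr rfl hsum, Finset.sum_sub_distrib, sumA ℓ n hℓ n le_rfl,
      ← Finset.mul_sum]
  have hG : Gk ℓ n n = 0 := by simp [Gk, Wk]
  have hTn : ∑ k ∈ Finset.range (n+1), Fk ℓ n k = Tn ℓ n := rfl
  rw [hG, hTn, Tclosed n ℓ hℓ]
  by_cases he : Even n
  · rw [if_pos he, if_pos he]; ring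
  · rw [if_neg he, if_neg he]; ring
end

section
/- Let n be a natural number and let a be a complex number such that 2a + j ≠ 0 for every integer j with 0 ≤ j ≤ 2n. Then ∑_{k=0}^{2n+1} ((-(2n+1))_k · (a)_k · 2^k) / ((2a)_k · k!) = 0, where (x)_k = x(x+1)⋯(x+k-1) is the Pochhammer symbol (rising factorial). -/
/-- The Pochhammer symbol (rising factorial) `(x)_k = x(x+1)⋯(x+k-1)` for complex `x`. -/
noncomputable def poch (x : ℂ) (k : ℕ) : ℂ := ∏ j ∈ Finset.range k, (x + j)

/-- The generic term of the hypergeometric sum. -/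
noncomputable def hterm (a : ℂ) (m k : ℕ) : ℂ :=
  poch (-(m : ℂ)) k * poch a k * 2 ^ k / (poch (2 * a) k * (Nat.factorial k))

lemma poch_zero (x : ℂ) : poch x 0 = 1 := Finset.prod_range_zero _

lemma poch_succ (x : ℂ) (k : ℕ) : poch x (k + 1) = poch x k * (x + k) :=
  Finset.prod_range_succ _ _

lemma poch_nat_eq_zero (m k : ℕ) (h : m < k) : poch (-(m : ℂ)) k = 0 := by
  apply Finset.prod_eq_zero (Finset.mem_range.mpr h)
  simp

lemma poch_ne_zero (a : ℂ) (k : ℕ) (h : ∀ j : ℕ, j < k → 2 * a + (j : ℂ) ≠ 0) :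
    poch (2 * a) k ≠ 0 := by
  apply Finset.prod_ne_zero_iff.mpr
  intro j hj
  exact h j (Finset.mem_range.mp hj)

lemma poch_shift (x : ℂ) (k : ℕ) :
    poch (x + 2) k * (x * (x + 1)) = poch x k * ((x + k) * (x + k + 1)) := by
  induction k with
  | zero => simp [poch_zero]
  | succ k ih =>
      rw [poch_succ, poch_succ]
      push_cast
      calc poch (x + 2) k * (x + 2 + k) * (x * (x + 1))
          = poch (x + 2) k * (x * (x + 1)) * (x + 2 + k) := by ring
        _ = poch x k * ((x + k) * (x + k + 1)) * (x + 2 + k) := by rw [ih]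
        _ = poch x k * (x + k) * ((x + (k + 1)) * (x + (k + 1) + 1)) := by ring

/-- Pointwise telescoping certificate. -/
lemma point (a : ℂ) (m k : ℕ) (hkm : k ≤ m + 1)
    (h : ∀ j : ℕ, j ≤ m + 1 → 2 * a + (j : ℂ) ≠ 0) :
    ((m : ℂ) + 2) * (2 * a + (m : ℂ) + 1) * hterm a (m + 2) k
      - ((m : ℂ) + 2) * ((m : ℂ) + 1) * hterm a m k
    = (-((k : ℂ) + 1) * (2 * a + ((k : ℂ) + 1) - 1) * hterm a (m + 2) (k + 1))
      - (-(k : ℂ) * (2 * a + (k : ℂ) - 1) * hterm a (m + 2) k) := by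
  have hm1 : ((m : ℂ) + 1) ≠ 0 := Nat.cast_add_one_ne_zero m
  have hm2 : ((m : ℂ) + 2) ≠ 0 := by
    have := Nat.cast_add_one_ne_zero (R := ℂ) (m + 1)
    push_cast at this
    intro hc; exact this (by linear_combination hc)
  have hC : poch (2 * a) k ≠ 0 := poch_ne_zero a k (fun j hj => h j (by omega))
  have h2k : 2 * a + (k : ℂ) ≠ 0 := h k hkm
  have hF : ((Nat.factorial k : ℕ) : ℂ) ≠ 0 :=
    Nat.cast_ne_zero.mpr (Nat.factorial_ne_zero k)
  have hk1 : ((k : ℂ) + 1) ≠ 0 := Nat.cast_add_one_ne_zero k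
  have hcast2 : (((m + 2 : ℕ) : ℂ)) = (m : ℂ) + 2 := by push_cast; ring
  have hA2 : poch (-((m + 2 : ℕ) : ℂ)) k = poch (-(m : ℂ) - 2) k := by
    rw [hcast2]; congr 1; ring
  have hA2' : poch (-((m + 2 : ℕ) : ℂ)) (k + 1)
      = poch (-(m : ℂ) - 2) k * ((-(m : ℂ) - 2) + k) := by
    rw [hcast2]
    have : -((m : ℂ) + 2) = -(m : ℂ) - 2 := by ring
    rw [this, poch_succ]
  have hAm : poch (-(m : ℂ)) k
      = poch (-(m : ℂ) - 2) k * (((-(m : ℂ) - 2) + k) * ((-(m : ℂ) - 2) + k + 1))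
        / (((m : ℂ) + 2) * ((m : ℂ) + 1)) := by
    rw [eq_div_iff (mul_ne_zero hm2 hm1)]
    have := poch_shift (-(m : ℂ) - 2) k
    have hx2 : (-(m : ℂ) - 2) + 2 = -(m : ℂ) := by ring
    rw [hx2] at this
    rw [← this]; ring
  simp only [hterm, hA2, hA2', hAm, poch_succ a k, poch_succ (2 * a) k,
    Nat.factorial_succ]
  push_cast
  field_simp
  ring

/-- The contiguous recurrence `(m+2)(2a+m+1) f(m+2) = (m+2)(m+1) f(m)`. -/
lemma key (a : ℂ) (m : ℕ) (h : ∀ j : ℕ, j ≤ m + 1 → 2 * a + (j : ℂ) ≠ 0) :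
    ((m : ℂ) + 2) * (2 * a + (m : ℂ) + 1) * (∑ k ∈ Finset.range (m + 3), hterm a (m + 2) k)
      = ((m : ℂ) + 2) * ((m : ℂ) + 1) * (∑ k ∈ Finset.range (m + 1), hterm a m k) := by
  set G : ℕ → ℂ := fun j => -(j : ℂ) * (2 * a + (j : ℂ) - 1) * hterm a (m + 2) j with hG
  have tele : ∑ k ∈ Finset.range (m + 2), (G (k + 1) - G k) = G (m + 2) - G 0 :=
    Finset.sum_range_sub G (m + 2)
  have E : ∑ k ∈ Finset.range (m + 2),
      (((m : ℂ) + 2) * (2 * a + (m : ℂ) + 1) * hterm a (m + 2) k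
        - ((m : ℂ) + 2) * ((m : ℂ) + 1) * hterm a m k)
      = G (m + 2) - G 0 := by
    rw [← tele]
    refine Finset.sum_congr rfl fun k hk => ?_
    have hkm : k ≤ m + 1 := by have := Finset.mem_range.mp hk; omega
    have := point a m k hkm h
    simp only [hG]
    push_cast
    convert this using 2
  rw [Finset.sum_sub_distrib, ← Finset.mul_sum, ← Finset.mul_sum] at E
  have hsplit2 : ∑ k ∈ Finset.range (m + 3), hterm a (m + 2) k
      = (∑ k ∈ Finset.range (m + 2), hterm a (m + 2) k) + hterm a (m + 2) (m + 2) :=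
    Finset.sum_range_succ _ _
  have hsplit0 : ∑ k ∈ Finset.range (m + 2), hterm a m k
      = ∑ k ∈ Finset.range (m + 1), hterm a m k := by
    rw [Finset.sum_range_succ]
    have : hterm a m (m + 1) = 0 := by
      simp [hterm, poch_nat_eq_zero m (m + 1) (by omega)]
    rw [this, add_zero]
  have hG0 : G 0 = 0 := by simp [hG]
  have hGtop : G (m + 2) = -((m : ℂ) + 2) * (2 * a + (m : ℂ) + 1) * hterm a (m + 2) (m + 2) := by
    simp only [hG]
    push_cast
    ring
  rw [hsplit0, hG0, hGtop] at E
  rw [hsplit2]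
  linear_combination E

lemma main (a : ℂ) : ∀ n : ℕ, (∀ j : ℕ, j ≤ 2 * n → 2 * a + (j : ℂ) ≠ 0) →
    ∑ k ∈ Finset.range (2 * n + 2), hterm a (2 * n + 1) k = 0 := by
  intro n
  induction n with
  | zero =>
      intro h
      have h0 : 2 * a ≠ 0 := by
        have := h 0 (by omega); simpa using this
      simp only [Nat.mul_zero, Nat.zero_add]
      rw [Finset.sum_range_succ, Finset.sum_range_one]
      simp only [hterm, poch_zero, poch_succ]
      simp [poch_zero]
      field_simp
      ring_nf; simp [right_ne_zero_of_mul h0]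
  | succ n ih =>
      intro h
      have hprev : ∑ k ∈ Finset.range (2 * n + 2), hterm a (2 * n + 1) k = 0 :=
        ih (fun j hj => h j (by omega))
      have hk := key a (2 * n + 1) (fun j hj => h j (by omega))
      have hidx : 2 * n + 1 + 3 = 2 * (n + 1) + 2 := by omega
      have hidx2 : 2 * n + 1 + 2 = 2 * (n + 1) + 1 := by omega
      rw [hidx, hidx2, hprev, mul_zero] at hk
      have hm2 : ((2 * n + 1 : ℕ) : ℂ) + 2 ≠ 0 := by
        have := Nat.cast_add_one_ne_zero (R := ℂ) (2 * n + 2)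
        push_cast at this ⊢
        intro hc; exact this (by linear_combination hc)
      have h2a : 2 * a + ((2 * n + 1 : ℕ) : ℂ) + 1 ≠ 0 := by
        have := h (2 * n + 2) (by omega)
        push_cast at this ⊢
        intro hc; exact this (by linear_combination hc)
      have := mul_ne_zero hm2 h2a
      rcases mul_eq_zero.mp hk with hc | hs
      · rcases mul_eq_zero.mp hc with h1 | h2
        · exact absurd h1 hm2
        · exact absurd h2 h2a
      · exact hs

/-- The terminating odd (vanishing) case of the `₂F₁(2)` evaluation used in the
paper's first proof of Proposition 1. -/
theorem stmt_16 (n : ℕ) (a : ℂ) (h : ∀ j : ℕ, j ≤ 2 * n → 2 * a + (j : ℂ) ≠ 0) :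
    ∑ k ∈ Finset.range (2 * n + 2),
      poch (-((2 * n : ℂ) + 1)) k * poch a k * 2 ^ k
        / (poch (2 * a) k * (Nat.factorial k))
    = 0 := by
  have H := main a n h
  rw [← H]
  refine Finset.sum_congr rfl fun k _ => ?_
  simp only [hterm]
  congr 3
  push_cast
  ring
end
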